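/- Let b : P_∞ → 2^ω be continuous and nowhere dense-to-one, and let β ∈ P_f. Then there is a sequence (s_q)_{q∈ω} of finite binary sequences such that for every q: |s_q| > q; s_q agrees with β on its first q coordinates; s_q is not an initial segment of β; and for all p ≠ q, b[N_{s_p} ∩ P_∞] ∩ b[N_{s_q} ∩ P_∞] = ∅. -/

import Mathlib

/-- The set of eventually-zero binary sequences. -/
def Pfin : Set (ℕ → Bool) := {α | ∃ N : ℕ, ∀ n ≥ N, α n = false}

/-- The set of binary sequences with infinitely many ones. -/
def Pinf : Set (ℕ → Bool) := Pfinᶜ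

/-- The basic clopen set of sequences extending the finite sequence `s`. -/
def cyl (s : List Bool) : Set (ℕ → Bool) := {α | ∀ i < s.length, α i = s.getD i false}

open Set Filter Topology

lemma cyl_basis {U : Set (ℕ → Bool)} (hU : IsOpen U) {x : ℕ → Bool} (hx : x ∈ U) :
    ∃ n, ∀ y : ℕ → Bool, (∀ i < n, y i = x i) → y ∈ U := by
  obtain ⟨I, u, hu, hsub⟩ := isOpen_pi_iff.mp hU x hx
  refine ⟨I.sup id + 1, fun y hy => hsub fun i hi => ?_⟩
  have : i < I.sup id + 1 := Nat.lt_succ_of_le (Finset.le_sup (f := id) hi)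
  rw [hy i this]; exact (hu i hi).2

lemma isOpen_cylSet (n : ℕ) (x : ℕ → Bool) :
    IsOpen {y : ℕ → Bool | ∀ i < n, y i = x i} := by
  have : {y : ℕ → Bool | ∀ i < n, y i = x i}
      = ⋂ i ∈ Finset.range n, {y : ℕ → Bool | y i = x i} := by
    ext y; simp [Finset.mem_range]
  rw [this]
  refine isOpen_biInter_finset fun i _ => ?_
  have : {y : ℕ → Bool | y i = x i} = (fun y : ℕ → Bool => y i) ⁻¹' {x i} := rfl
  rw [this]
  exact (isOpen_discrete _).preimage (continuous_apply i)

lemma dense_Pinf {U : Set (ℕ → Bool)} (hU : IsOpen U) (hne : U.Nonempty) :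
    ∃ z ∈ U, z ∈ Pinf := by
  obtain ⟨x, hx⟩ := hne
  obtain ⟨n, hn⟩ := cyl_basis hU hx
  refine ⟨fun i => if i < n then x i else true, hn _ (fun i hi => if_pos hi), ?_⟩
  rintro ⟨N, hN⟩
  have h1 := hN (max N n) (le_max_left _ _)
  simp only [] at h1
  rw [if_neg (by omega)] at h1
  exact Bool.true_eq_false.mp h1

section chain

variable {b : Pinf → (ℕ → Bool)}

variable (b) in
/-- Union of closures of fibers of points in a list. -/
def bad (l : List Pinf) : Set (ℕ → Bool) :=
  l.foldr (fun w S => closure (Subtype.val '' (b ⁻¹' {b w})) ∪ S) ∅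

lemma bad_closed (l : List Pinf) : IsClosed (bad b l) := by
  induction l with
  | nil => exact isClosed_empty
  | cons w l ih => exact IsClosed.union isClosed_closure ih

lemma bad_interior (hfib : ∀ γ : ℕ → Bool, IsNowhereDense (Subtype.val '' (b ⁻¹' {γ})))
    (l : List Pinf) : interior (bad b l) = ∅ := by
  induction l with
  | nil => simp [bad]
  | cons w l ih =>
    show interior (closure (Subtype.val '' (b ⁻¹' {b w})) ∪ bad b l) = ∅
    rw [interior_union_isClosed_of_interior_empty isClosed_closure ih]
    exact hfib (b w)

lemma bad_superset (l : List Pinf) {w : Pinf} (hw : w ∈ l) :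
    closure (Subtype.val '' (b ⁻¹' {b w})) ⊆ bad b l := by
  induction l with
  | nil => cases hw
  | cons v l ih =>
    rcases List.mem_cons.mp hw with h | h
    · subst h; exact subset_union_left
    · exact (ih h).trans subset_union_right

lemma step_exists (hfib : ∀ γ : ℕ → Bool, IsNowhereDense (Subtype.val '' (b ⁻¹' {γ})))
    (β : ℕ → Bool) (l : List Pinf) (n : ℕ) :
    ∃ z : Pinf, (∀ i < n, (z : ℕ → Bool) i = β i) ∧ ∀ w ∈ l, b z ≠ b w := by
  set O : Set (ℕ → Bool) := {y | ∀ i < n, y i = β i} with hO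
  have hOopen : IsOpen O := isOpen_cylSet n β
  have hopen : IsOpen (O \ bad b l) := hOopen.sdiff (bad_closed l)
  have hne : (O \ bad b l).Nonempty := by
    by_contra h
    rw [not_nonempty_iff_eq_empty, diff_eq_empty] at h
    have : O ⊆ interior (bad b l) := hOopen.subset_interior_iff.mpr h
    rw [bad_interior hfib l] at this
    exact this (fun i _ => rfl)
  obtain ⟨z, hz, hzP⟩ := dense_Pinf hopen hne
  refine ⟨⟨z, hzP⟩, fun i hi => hz.1 i hi, fun w hw hbw => ?_⟩
  exact hz.2 (bad_superset l hw (subset_closure ⟨⟨z, hzP⟩, hbw, rfl⟩))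

variable (b) in
/-- Recursively chosen list of points near `β` with pairwise distinct `b`-values. -/
noncomputable def chain (hfib : ∀ γ : ℕ → Bool, IsNowhereDense (Subtype.val '' (b ⁻¹' {γ})))
    (β : ℕ → Bool) : ℕ → List Pinf :=
  fun n => Nat.rec [] (fun m lm => Classical.choose (step_exists hfib β lm m) :: lm) n

variable (b) in
/-- The `n`-th chosen point. -/
noncomputable def pt (hfib : ∀ γ : ℕ → Bool, IsNowhereDense (Subtype.val '' (b ⁻¹' {γ})))
    (β : ℕ → Bool) (n : ℕ) : Pinf :=
  Classical.choose (step_exists hfib β (chain b hfib β n) n)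

variable {hfib : ∀ γ : ℕ → Bool, IsNowhereDense (Subtype.val '' (b ⁻¹' {γ}))} {β : ℕ → Bool}

lemma chain_succ (n : ℕ) :
    chain b hfib β (n + 1) = pt b hfib β n :: chain b hfib β n := rfl

lemma pt_agree (n : ℕ) : ∀ i < n, (pt b hfib β n : ℕ → Bool) i = β i :=
  (Classical.choose_spec (step_exists hfib β (chain b hfib β n) n)).1

lemma pt_ne_chain (n : ℕ) : ∀ w ∈ chain b hfib β n, b (pt b hfib β n) ≠ b w :=
  (Classical.choose_spec (step_exists hfib β (chain b hfib β n) n)).2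

lemma pt_mem_chain {m n : ℕ} (h : m < n) : pt b hfib β m ∈ chain b hfib β n := by
  induction n with
  | zero => omega
  | succ k ih =>
    rw [chain_succ]
    rcases Nat.lt_succ_iff_lt_or_eq.mp h with h' | h'
    · exact List.mem_cons_of_mem _ (ih h')
    · subst h'; exact List.mem_cons_self

lemma pt_b_ne {m n : ℕ} (h : m < n) : b (pt b hfib β n) ≠ b (pt b hfib β m) :=
  pt_ne_chain n _ (pt_mem_chain h)

end chain

lemma exists_strictmono_comp {e : ℕ → ℕ} (he : Tendsto e atTop atTop) :
    ∃ ψ : ℕ → ℕ, StrictMono ψ ∧ StrictMono (e ∘ ψ) := by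
  have step : ∀ t : ℕ, ∃ j, t < j ∧ e t < e j := by
    intro t
    obtain ⟨J, hJ⟩ := Filter.eventually_atTop.mp (he.eventually (eventually_gt_atTop (e t)))
    exact ⟨max J (t + 1), by omega, hJ _ (le_max_left _ _)⟩
  choose f hf1 hf2 using step
  exact ⟨fun k => Nat.rec 0 (fun _ prev => f prev) k,
    strictMono_nat_of_lt_succ fun k => hf1 _,
    strictMono_nat_of_lt_succ fun k => by exact hf2 _⟩

lemma getD_range_map (f : ℕ → Bool) {L i : ℕ} (h : i < L) :
    ((List.range L).map f).getD i false = f i := by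
  rw [List.getD_eq_getElem _ _ (by simpa using h)]
  simp

theorem separating_sequences_exist
    (b : Pinf → (ℕ → Bool)) (hb : Continuous b)
    (hfib : ∀ γ : ℕ → Bool, IsNowhereDense (Subtype.val '' (b ⁻¹' {γ})))
    (β : ℕ → Bool) (hβ : β ∈ Pfin) :
    ∃ s : ℕ → List Bool,
      (∀ q : ℕ, q < (s q).length) ∧
      (∀ q : ℕ, ∀ i < q, (s q).getD i false = β i) ∧
      (∀ q : ℕ, ¬ (∀ i < (s q).length, (s q).getD i false = β i)) ∧
      (∀ p q : ℕ, p ≠ q →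
        (b '' {x : Pinf | (x : ℕ → Bool) ∈ cyl (s p)}) ∩
          (b '' {x : Pinf | (x : ℕ → Bool) ∈ cyl (s q)}) = ∅) := by
  classical
  set x : ℕ → Pinf := pt b hfib β with hxdef
  have hagree : ∀ n : ℕ, ∀ i < n, (x n : ℕ → Bool) i = β i := fun n => pt_agree n
  have hdist : ∀ m n : ℕ, m < n → b (x n) ≠ b (x m) := fun m n h => pt_b_ne h
  obtain ⟨γ, -, φ, hφ, hconv⟩ :=
    isCompact_univ.tendsto_subseq (x := fun n => b (x n)) (fun n => Set.mem_univ _)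
  obtain ⟨J0, hJ0⟩ : ∃ J0 : ℕ, ∀ j, b (x (φ (J0 + j))) ≠ γ := by
    by_cases hg : ∃ j, b (x (φ j)) = γ
    · obtain ⟨j0, hj0⟩ := hg
      refine ⟨j0 + 1, fun j hj => ?_⟩
      exact hdist (φ j0) (φ (j0 + 1 + j)) (hφ (by omega)) (hj.trans hj0.symm)
    · push_neg at hg; exact ⟨0, fun j => hg _⟩
  have htc : Tendsto (fun j => b (x (φ (J0 + j)))) atTop (𝓝 γ) := by
    have h1 : Tendsto (fun j : ℕ => J0 + j) atTop atTop :=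
      tendsto_atTop_atTop.2 fun M => ⟨M, fun a ha => by omega⟩
    exact hconv.comp h1
  have hne : ∀ j, ∃ i, b (x (φ (J0 + j))) i ≠ γ i := fun j => Function.ne_iff.mp (hJ0 j)
  obtain ⟨e, he1, he2, hte⟩ : ∃ e : ℕ → ℕ,
      (∀ j, b (x (φ (J0 + j))) (e j) ≠ γ (e j)) ∧
      (∀ j, ∀ i < e j, b (x (φ (J0 + j))) i = γ i) ∧
      Tendsto e atTop atTop := by
    refine ⟨fun j => Nat.find (hne j), fun j => Nat.find_spec (hne j),
      fun j i hi => not_not.mp (Nat.find_min (hne j) hi), ?_⟩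
    rw [tendsto_atTop]
    intro M
    have hW : IsOpen {w : ℕ → Bool | ∀ i < M, w i = γ i} := isOpen_cylSet M γ
    have hγW : γ ∈ {w : ℕ → Bool | ∀ i < M, w i = γ i} := fun i _ => rfl
    filter_upwards [htc (hW.mem_nhds hγW)] with j hj
    by_contra h
    push_neg at h
    exact Nat.find_spec (hne j) (hj _ h)
  obtain ⟨ψ, hψ, hEψ⟩ := exists_strictmono_comp hte
  -- continuity: cylinder neighborhoods mapping into the separating clopen sets
  have cont : ∀ k : ℕ, ∃ n, ∀ y : Pinf,
      (∀ i < n, (y : ℕ → Bool) i = (x (φ (J0 + ψ k)) : ℕ → Bool) i) →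
      ((∀ i < e (ψ k), b y i = γ i) ∧ b y (e (ψ k)) ≠ γ (e (ψ k))) := by
    intro k
    have hU1 : IsOpen {w : ℕ → Bool | ∀ i < e (ψ k), w i = γ i} := isOpen_cylSet _ γ
    have hU2 : IsOpen {w : ℕ → Bool | w (e (ψ k)) ≠ γ (e (ψ k))} := by
      have : {w : ℕ → Bool | w (e (ψ k)) ≠ γ (e (ψ k))}
          = (fun w : ℕ → Bool => w (e (ψ k))) ⁻¹' {γ (e (ψ k))}ᶜ := rfl
      rw [this]
      exact (isOpen_discrete _).preimage (continuous_apply _)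
    have hUopen : IsOpen ({w : ℕ → Bool | ∀ i < e (ψ k), w i = γ i}
        ∩ {w | w (e (ψ k)) ≠ γ (e (ψ k))}) := hU1.inter hU2
    have hop : IsOpen (b ⁻¹' _) := hUopen.preimage hb
    obtain ⟨V, hV, hVeq⟩ := isOpen_induced_iff.mp hop
    have hzV : (x (φ (J0 + ψ k)) : ℕ → Bool) ∈ V := by
      have : x (φ (J0 + ψ k)) ∈ Subtype.val ⁻¹' V := by
        rw [hVeq]
        exact ⟨he2 (ψ k), he1 (ψ k)⟩
      exact this
    obtain ⟨n, hn⟩ := cyl_basis hV hzV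
    refine ⟨n, fun y hy => ?_⟩
    have hyV : y ∈ Subtype.val ⁻¹' V := hn _ hy
    rw [hVeq] at hyV
    exact hyV
  choose nn hnn using cont
  -- disagreement with β
  have hdiffex : ∀ k : ℕ, ∃ d, (x (φ (J0 + ψ k)) : ℕ → Bool) d ≠ β d := by
    intro k
    refine Function.ne_iff.mp ?_
    intro h
    exact (x (φ (J0 + ψ k))).2 (h ▸ hβ)
  choose dd hdd using hdiffex
  have hidx : ∀ k : ℕ, k ≤ φ (J0 + ψ k) := by
    intro k
    calc k ≤ ψ k := hψ.le_apply
    _ ≤ J0 + ψ k := by omega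
    _ ≤ φ (J0 + ψ k) := hφ.le_apply
  refine ⟨fun k => (List.range (max (max (nn k) (k + 1)) (dd k + 1))).map
      (x (φ (J0 + ψ k)) : ℕ → Bool), ?_, ?_, ?_, ?_⟩
  · intro q
    simp only [List.length_map, List.length_range]
    omega
  · intro q i hi
    have hiL : i < max (max (nn q) (q + 1)) (dd q + 1) := by omega
    rw [getD_range_map _ hiL]
    exact hagree _ i (by have := hidx q; omega)
  · intro q hq
    have hdL : dd q < max (max (nn q) (q + 1)) (dd q + 1) := by omega
    have h1 := hq (dd q) (by simpa only [List.length_map, List.length_range] using hdL)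
    rw [getD_range_map _ hdL] at h1
    exact hdd q h1
  · intro p q hpq
    rw [Set.eq_empty_iff_forall_notMem]
    rintro w ⟨⟨yp, hyp, hwp⟩, ⟨yq, hyq, hwq⟩⟩
    have himg : ∀ k (y : Pinf), (y : ℕ → Bool) ∈ cyl ((List.range
        (max (max (nn k) (k + 1)) (dd k + 1))).map (x (φ (J0 + ψ k)) : ℕ → Bool)) →
        ((∀ i < e (ψ k), b y i = γ i) ∧ b y (e (ψ k)) ≠ γ (e (ψ k))) := by
      intro k y hy
      apply hnn k y
      intro i hi
      have hiL : i < max (max (nn k) (k + 1)) (dd k + 1) := by omega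
      have := hy i (by simpa only [List.length_map, List.length_range] using hiL)
      rwa [getD_range_map _ hiL] at this
    have hp := himg p yp hyp
    have hq' := himg q yq hyq
    rw [hwp] at hp
    rw [hwq] at hq'
    have hEne : e (ψ p) ≠ e (ψ q) := fun h => hpq (hEψ.injective h)
    rcases lt_or_gt_of_ne hEne with h | h
    · exact hp.2 (hq'.1 _ h)
    · exact hq'.2 (hp.1 _ h)
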